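/- Let X and Y be random variables over [M] with Δ(X,Y) ≥ ε, and let X⃗ and Y⃗ denote T i.i.d. copies of X and of Y respectively. Then there exist absolute constants ε₀ > 0 and c > 0 such that Δ(X⃗, Y⃗) ≥ min{ε₀, c·√T·ε}. -/

import Mathlib

open Finset


noncomputable def Bb (n k : ℕ) (t : ℝ) : ℝ := (n.choose k : ℝ) * t ^ k * (1 - t) ^ (n - k)

lemma Bb_nonneg {n k : ℕ} {t : ℝ} (h0 : 0 ≤ t) (h1 : t ≤ 1) : 0 ≤ Bb n k t := by
  unfold Bb
  have : (0:ℝ) ≤ 1 - t := by linarith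
  positivity

lemma sum_Bb (n : ℕ) (t : ℝ) : ∑ k ∈ range (n+1), Bb n k t = 1 := by
  have h := add_pow t (1-t) n
  simp only [add_sub_cancel, one_pow] at h
  rw [eq_comm, h]
  exact Finset.sum_congr rfl fun k _ => by unfold Bb; ring

lemma succ_bb_eq (m k : ℕ) (t : ℝ) :
    ((k:ℝ)+1) * Bb (m+1) (k+1) t = ((m:ℝ)+1) * t * Bb m k t := by
  have hc : (m+1) * m.choose k = (m+1).choose (k+1) * (k+1) := Nat.add_one_mul_choose_eq m k
  have hcr : ((m:ℝ)+1) * (m.choose k : ℝ) = ((m+1).choose (k+1) : ℝ) * ((k:ℝ)+1) := by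
    exact_mod_cast congrArg (Nat.cast (R := ℝ)) hc
  unfold Bb
  have he : m + 1 - (k + 1) = m - k := by omega
  rw [he, pow_succ]
  linear_combination (-(t ^ k * t * (1 - t) ^ (m - k))) * hcr

lemma sum_mul_Bb (n : ℕ) (t : ℝ) : ∑ k ∈ range (n+1), (k:ℝ) * Bb n k t = n * t := by
  induction n with
  | zero => simp [Bb]
  | succ m ih =>
    clear ih
    rw [Finset.sum_range_succ']
    push_cast
    rw [zero_mul, add_zero]
    calc ∑ k ∈ range (m+1), ((k:ℝ)+1) * Bb (m+1) (k+1) t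
          = ∑ k ∈ range (m+1), ((m:ℝ)+1) * t * Bb m k t :=
            Finset.sum_congr rfl fun k _ => succ_bb_eq m k t
      _ = ((m:ℝ)+1) * t * ∑ k ∈ range (m+1), Bb m k t := by rw [Finset.mul_sum]
      _ = ((m:ℝ)+1) * t := by rw [sum_Bb]; ring

lemma sum_mulmul_Bb (n : ℕ) (t : ℝ) :
    ∑ k ∈ range (n+1), (k:ℝ) * ((k:ℝ) - 1) * Bb n k t = n * ((n:ℝ) - 1) * t^2 := by
  induction n with
  | zero => simp [Bb]
  | succ m ih =>
    clear ih
    rw [Finset.sum_range_succ']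
    push_cast
    rw [zero_mul, zero_mul, add_zero]
    calc ∑ k ∈ range (m+1), ((k:ℝ)+1) * ((k:ℝ)+1-1) * Bb (m+1) (k+1) t
          = ∑ k ∈ range (m+1), ((m:ℝ)+1) * t * ((k:ℝ) * Bb m k t) := by
            refine Finset.sum_congr rfl fun k _ => ?_
            have := succ_bb_eq m k t
            nlinarith [this]
      _ = ((m:ℝ)+1) * t * ∑ k ∈ range (m+1), (k:ℝ) * Bb m k t := by rw [Finset.mul_sum]
      _ = ((m:ℝ)+1) * t * ((m:ℝ) * t) := by rw [sum_mul_Bb]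
      _ = ((m:ℝ)+1) * ((m:ℝ)+1-1) * t^2 := by ring

lemma var_Bb (n : ℕ) (t : ℝ) :
    ∑ k ∈ range (n+1), ((k:ℝ) - n*t)^2 * Bb n k t = n * t * (1 - t) := by
  have expand : ∀ k ∈ range (n+1), ((k:ℝ) - n*t)^2 * Bb n k t =
      (k:ℝ)*((k:ℝ)-1) * Bb n k t + (1 - 2*(n:ℝ)*t) * ((k:ℝ) * Bb n k t)
        + ((n:ℝ)*t)^2 * Bb n k t := fun k _ => by ring
  rw [Finset.sum_congr rfl expand]
  rw [Finset.sum_add_distrib, Finset.sum_add_distrib, ← Finset.mul_sum, ← Finset.mul_sum,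
    sum_mulmul_Bb, sum_mul_Bb, sum_Bb]
  ring



lemma cheb (n : ℕ) (t s : ℝ) (h0 : 0 ≤ t) (h1 : t ≤ 1) (hs : 0 < s) (K : Finset ℕ)
    (hcov : ∀ j ∈ range (n+1), |(j:ℝ) - n*t| < s → j ∈ K) :
    1 - n*t*(1-t)/s^2 ≤ ∑ j ∈ K, Bb n j t := by
  classical
  have hBnn : ∀ j, 0 ≤ Bb n j t := fun j => Bb_nonneg h0 h1
  set C : Finset ℕ := (range (n+1)).filter (fun (j:ℕ) => |(j:ℝ) - n*t| < s) with hC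
  have hsub : C ⊆ K := fun j hj => by
    rw [hC, Finset.mem_filter] at hj; exact hcov j hj.1 hj.2
  have h2 : ∑ j ∈ C, Bb n j t ≤ ∑ j ∈ K, Bb n j t :=
    Finset.sum_le_sum_of_subset_of_nonneg hsub (fun j _ _ => hBnn j)
  refine le_trans ?_ h2
  -- sum over complement within range (n+1)
  have hsplit : ∑ j ∈ C, Bb n j t
      = 1 - ∑ j ∈ (range (n+1)).filter (fun (j:ℕ) => ¬ (|(j:ℝ) - n*t| < s)), Bb n j t := by
    rw [eq_sub_iff_add_eq, hC, Finset.sum_filter_add_sum_filter_not, sum_Bb]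
  rw [hsplit]
  have htail : ∑ j ∈ (range (n+1)).filter (fun (j:ℕ) => ¬ (|(j:ℝ) - n*t| < s)), Bb n j t
      ≤ n*t*(1-t)/s^2 := by
    have step1 : ∑ j ∈ (range (n+1)).filter (fun (j:ℕ) => ¬ (|(j:ℝ) - n*t| < s)), Bb n j t
        ≤ ∑ j ∈ (range (n+1)).filter (fun (j:ℕ) => ¬ (|(j:ℝ) - n*t| < s)),
            (((j:ℝ) - n*t)^2 / s^2) * Bb n j t := by
      refine Finset.sum_le_sum fun j hj => ?_
      rw [Finset.mem_filter] at hj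
      have habs : s ≤ |(j:ℝ) - n*t| := not_lt.mp hj.2
      have h2' : s^2 ≤ ((j:ℝ) - n*t)^2 := by
        have := sq_abs ((j:ℝ) - n*t)
        nlinarith [abs_nonneg ((j:ℝ) - n*t)]
      have : (1:ℝ) ≤ ((j:ℝ) - n*t)^2 / s^2 := by
        rw [le_div_iff₀ (by positivity)]; linarith
      nlinarith [hBnn j]
    refine le_trans step1 ?_
    have step2 : ∑ j ∈ (range (n+1)).filter (fun (j:ℕ) => ¬ (|(j:ℝ) - n*t| < s)),
            (((j:ℝ) - n*t)^2 / s^2) * Bb n j t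
        ≤ ∑ j ∈ range (n+1), (((j:ℝ) - n*t)^2 / s^2) * Bb n j t := by
      refine Finset.sum_le_sum_of_subset_of_nonneg (Finset.filter_subset _ _) fun j _ _ => ?_
      have := hBnn j
      positivity
    refine le_trans step2 ?_
    have : ∑ j ∈ range (n+1), (((j:ℝ) - n*t)^2 / s^2) * Bb n j t
        = (∑ j ∈ range (n+1), ((j:ℝ) - n*t)^2 * Bb n j t) / s^2 := by
      rw [Finset.sum_div]
      exact Finset.sum_congr rfl fun j _ => by ring
    rw [this, var_Bb]
  linarith



lemma hasDerivAt_Bb' (a b : ℕ) (t : ℝ) :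
    HasDerivAt (Bb (a+b+1) (a+1))
      (((a:ℝ)+b+1) * (Bb (a+b) a t - Bb (a+b) (a+1) t)) t := by
  have h1 : HasDerivAt (fun t : ℝ => t ^ (a+1)) (((a:ℝ)+1) * t ^ a) t := by
    have := hasDerivAt_pow (a+1) t
    simpa using this
  have h2 : HasDerivAt (fun t : ℝ => (1 - t) ^ b) ((b:ℝ) * (1-t)^(b-1) * (-1)) t :=
    ((hasDerivAt_id t).const_sub 1).pow b
  have h3 := (h1.mul h2).const_mul (((a+b+1).choose (a+1) : ℝ))
  have he : a + b + 1 - (a + 1) = b := by omega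
  have he2 : a + b - a = b := by omega
  have he3 : a + b - (a + 1) = b - 1 := by omega
  have hc1 : ((a:ℝ)+b+1) * ((a+b).choose a : ℝ) = ((a+b+1).choose (a+1) : ℝ) * ((a:ℝ)+1) := by
    have := Nat.add_one_mul_choose_eq (a+b) a
    exact_mod_cast congrArg (Nat.cast (R := ℝ)) this
  have hc2 : ((a:ℝ)+b+1) * ((a+b).choose (a+1) : ℝ) = ((a+b+1).choose (a+1) : ℝ) * (b:ℝ) := by
    have e1 : (a+b+1).choose (a+1+1) * (a+1+1) = (a+b+1).choose (a+1) * (a+b+1 - (a+1)) :=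
      Nat.choose_succ_right_eq (a+b+1) (a+1)
    have e2 : (a+b+1) * (a+b).choose (a+1) = (a+b+1).choose (a+1+1) * (a+1+1) :=
      Nat.add_one_mul_choose_eq (a+b) (a+1)
    have : (a+b+1) * (a+b).choose (a+1) = (a+b+1).choose (a+1) * b := by
      rw [e2, e1, he]
    exact_mod_cast congrArg (Nat.cast (R := ℝ)) this
  have hgoal : ((a+b+1).choose (a+1) : ℝ) * (((a:ℝ)+1) * t ^ a * (1 - t) ^ b
        + t ^ (a+1) * ((b:ℝ) * (1-t)^(b-1) * (-1)))
      = ((a:ℝ)+b+1) * (Bb (a+b) a t - Bb (a+b) (a+1) t) := by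
    unfold Bb
    rw [he2, he3]
    linear_combination (-(t ^ a * (1-t)^b)) * hc1 + (t^(a+1) * (1-t)^(b-1)) * hc2
  have hfun : Bb (a+b+1) (a+1) = fun t : ℝ =>
      ((a+b+1).choose (a+1) : ℝ) * (t ^ (a+1) * (1 - t) ^ b) := by
    funext u; unfold Bb; rw [he]; ring
  rw [hfun, ← hgoal]
  exact h3

lemma hasDerivAt_G (n j : ℕ) (t : ℝ) (hj : j < n) :
    HasDerivAt (fun t => ∑ i ∈ Icc (j+1) n, Bb n i t) ((n:ℝ) * Bb (n-1) j t) t := by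
  have hder : ∀ i ∈ Icc (j+1) n,
      HasDerivAt (Bb n i) ((n:ℝ) * (Bb (n-1) (i-1) t - Bb (n-1) i t)) t := by
    intro i hi
    rw [Finset.mem_Icc] at hi
    obtain ⟨h1, h2⟩ := hi
    have ha : i - 1 + (n - i) + 1 = n := by omega
    have hb : i - 1 + 1 = i := by omega
    have hn1 : i - 1 + (n - i) = n - 1 := by omega
    have hder' := hasDerivAt_Bb' (i-1) (n-i) t
    rw [ha, hb, hn1] at hder'
    have hcast : ((i-1 : ℕ):ℝ) + ((n-i : ℕ):ℝ) + 1 = (n:ℝ) := by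
      have h1' : 1 ≤ i := by omega
      push_cast [Nat.cast_sub h1', Nat.cast_sub h2]
      ring
    rw [hcast] at hder'
    exact hder'
  have hsum := HasDerivAt.fun_sum hder
  have hval : ∑ i ∈ Icc (j+1) n, (n:ℝ) * (Bb (n-1) (i-1) t - Bb (n-1) i t)
      = (n:ℝ) * Bb (n-1) j t := by
    have hre : ∑ i ∈ Icc (j+1) n, (n:ℝ) * (Bb (n-1) (i-1) t - Bb (n-1) i t)
        = ∑ l ∈ range (n - j), ((n:ℝ) * Bb (n-1) (j+l) t - (n:ℝ) * Bb (n-1) (j+(l+1)) t) := by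
      rw [← Finset.Ico_add_one_right_eq_Icc, Finset.sum_Ico_eq_sum_range]
      have hcnt : n + 1 - (j+1) = n - j := by omega
      rw [hcnt]
      refine Finset.sum_congr rfl fun l _ => ?_
      have e1 : j + 1 + l - 1 = j + l := by omega
      have e2 : j + 1 + l = j + (l + 1) := by omega
      rw [e1, e2]
      ring
    rw [hre, Finset.sum_range_sub' (fun l => (n:ℝ) * Bb (n-1) (j+l) t) (n-j)]
    have : j + (n - j) = n := by omega
    rw [this]
    have hz : Bb (n-1) n t = 0 := by
      unfold Bb
      rw [Nat.choose_eq_zero_of_lt (by omega)]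
      simp
    rw [hz]
    ring
  rw [← hval]
  exact hsum


lemma fiber_sum {M T : ℕ} (f : Fin M → ℝ) (A : Finset (Fin M)) (I : Finset (Fin T)) :
    ∑ y ∈ univ.filter (fun y : Fin T → Fin M => univ.filter (fun i => y i ∈ A) = I),
        ∏ i, f (y i)
      = (∑ x ∈ A, f x) ^ I.card * (∑ x ∈ Aᶜ, f x) ^ (T - I.card) := by
  classical
  have hset : univ.filter (fun y : Fin T → Fin M => univ.filter (fun i => y i ∈ A) = I)
      = Fintype.piFinset (fun i => if i ∈ I then A else Aᶜ) := by
    ext y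
    simp only [Finset.mem_filter, Finset.mem_univ, true_and, Fintype.mem_piFinset,
      Finset.ext_iff]
    constructor
    · intro h i
      have := h i
      by_cases hi : i ∈ I
      · rw [if_pos hi]; exact this.mpr hi
      · rw [if_neg hi, Finset.mem_compl]; exact fun hyA => hi (this.mp hyA)
    · intro h i
      have := h i
      by_cases hi : i ∈ I
      · rw [if_pos hi] at this
        exact ⟨fun _ => hi, fun _ => this⟩
      · rw [if_neg hi] at this
        rw [Finset.mem_compl] at this
        exact ⟨fun hyA => absurd hyA this, fun hI => absurd hI hi⟩
  rw [hset, ← Finset.prod_univ_sum]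
  have : ∀ i : Fin T, ∑ x ∈ (if i ∈ I then A else Aᶜ), f x
      = if i ∈ I then (∑ x ∈ A, f x) else (∑ x ∈ Aᶜ, f x) := by
    intro i; by_cases hi : i ∈ I <;> simp [hi]
  rw [Finset.prod_congr rfl (fun i _ => this i)]
  rw [Finset.prod_ite]
  simp only [Finset.prod_const]
  congr 1
  · congr 1
    rw [Finset.filter_mem_eq_inter, Finset.univ_inter]
  · congr 1
    have hcompl : (univ.filter (fun x : Fin T => x ∉ I)) = Iᶜ := by ext i; simp
    rw [hcompl, Finset.card_compl, Fintype.card_fin]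



lemma reduction {M T : ℕ} (p q : Fin M → ℝ) (hp : ∑ x, p x = 1) (hq : ∑ x, q x = 1)
    (A : Finset (Fin M)) :
    ∑ k ∈ range (T+1), |Bb T k (∑ x ∈ A, p x) - Bb T k (∑ x ∈ A, q x)|
      ≤ ∑ y : Fin T → Fin M, |(∏ i, p (y i)) - ∏ i, q (y i)| := by
  classical
  set a := ∑ x ∈ A, p x with ha
  set b := ∑ x ∈ A, q x with hb
  have hca : ∑ x ∈ Aᶜ, p x = 1 - a := by
    have := Finset.sum_add_sum_compl A p
    rw [hp] at this; linarith
  have hcb : ∑ x ∈ Aᶜ, q x = 1 - b := by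
    have := Finset.sum_add_sum_compl A q
    rw [hq] at this; linarith
  -- group RHS by fibers of g
  set g : (Fin T → Fin M) → Finset (Fin T) := fun y => univ.filter (fun i => y i ∈ A) with hg
  have hfib := Finset.sum_fiberwise (univ : Finset (Fin T → Fin M)) g
      (fun y => |(∏ i, p (y i)) - ∏ i, q (y i)|)
  rw [← hfib]
  -- per fiber bound
  have hperfiber : ∀ I : Finset (Fin T),
      |a ^ I.card * (1-a) ^ (T - I.card) - b ^ I.card * (1-b) ^ (T - I.card)|
        ≤ ∑ y ∈ univ.filter (fun y => g y = I), |(∏ i, p (y i)) - ∏ i, q (y i)| := by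
    intro I
    have h1 : a ^ I.card * (1-a) ^ (T - I.card) - b ^ I.card * (1-b) ^ (T - I.card)
        = ∑ y ∈ univ.filter (fun y => g y = I), ((∏ i, p (y i)) - ∏ i, q (y i)) := by
      rw [Finset.sum_sub_distrib, fiber_sum p A I, fiber_sum q A I, hca, hcb]
    rw [h1]
    exact Finset.abs_sum_le_sum_abs _ _
  -- LHS equals sum over I of the |a^.. - b^..|
  have hLHS : ∑ k ∈ range (T+1), |Bb T k a - Bb T k b|
      = ∑ I : Finset (Fin T),
          |a ^ I.card * (1-a) ^ (T - I.card) - b ^ I.card * (1-b) ^ (T - I.card)| := by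
    have h2 : ∀ I : Finset (Fin T), I ∈ (univ : Finset (Finset (Fin T))) → True := fun _ _ => trivial
    rw [← Finset.powerset_univ, Finset.sum_powerset]
    rw [Finset.card_univ, Fintype.card_fin]
    refine Finset.sum_congr rfl fun k hk => ?_
    have : ∀ I ∈ powersetCard k (univ : Finset (Fin T)),
        |a ^ I.card * (1-a) ^ (T - I.card) - b ^ I.card * (1-b) ^ (T - I.card)|
          = |a ^ k * (1-a) ^ (T - k) - b ^ k * (1-b) ^ (T - k)| := by
      intro I hI
      rw [(Finset.mem_powersetCard.mp hI).2]
    rw [Finset.sum_congr rfl this, Finset.sum_const, Finset.card_powersetCard,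
      Finset.card_univ, Fintype.card_fin, nsmul_eq_mul]
    have hdiff : Bb T k a - Bb T k b
        = (T.choose k : ℝ) * ((a ^ k * (1-a) ^ (T-k)) - (b ^ k * (1-b) ^ (T-k))) := by
      unfold Bb; ring
    rw [hdiff, abs_mul, abs_of_nonneg (by positivity : (0:ℝ) ≤ (T.choose k : ℝ))]
  rw [hLHS]
  exact Finset.sum_le_sum fun I _ => hperfiber I

lemma card_filter_Ioo (n : ℕ) (L R : ℝ) (hLR : 0 ≤ R - L) :
    ((((range n).filter (fun (j:ℕ) => L < (j:ℝ) ∧ (j:ℝ) < R)).card : ℝ) : ℝ) ≤ R - L + 1 := by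
  classical
  set K := (range n).filter (fun (j:ℕ) => L < (j:ℝ) ∧ (j:ℝ) < R) with hK
  have hmap : (K.image (fun j : ℕ => (j:ℤ))).card = K.card :=
    Finset.card_image_of_injective _ (fun x y h => by exact_mod_cast h)
  have hsub : K.image (fun j : ℕ => (j:ℤ)) ⊆ Finset.Icc (⌊L⌋+1) (⌈R⌉-1) := by
    intro m hm
    rw [Finset.mem_image] at hm
    obtain ⟨j, hj, rfl⟩ := hm
    rw [hK, Finset.mem_filter] at hj
    rw [Finset.mem_Icc]
    constructor
    · have : ⌊L⌋ < (j:ℤ) := Int.floor_lt.mpr (by exact_mod_cast hj.2.1)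
      omega
    · have : (j:ℤ) < ⌈R⌉ := Int.lt_ceil.mpr (by exact_mod_cast hj.2.2)
      omega
  have hcard : K.card ≤ (Finset.Icc (⌊L⌋+1) (⌈R⌉-1)).card := by
    rw [← hmap]; exact Finset.card_le_card hsub
  have hIcc : (Finset.Icc (⌊L⌋+1) (⌈R⌉-1)).card = (⌈R⌉ - 1 + 1 - (⌊L⌋+1)).toNat := Int.card_Icc _ _
  have hfl : (⌊L⌋ : ℝ) > L - 1 := by
    have := Int.lt_floor_add_one L; linarith [Int.floor_le L, this]
  have hcl : (⌈R⌉ : ℝ) < R + 1 := Int.ceil_lt_add_one R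
  have : ((⌈R⌉ - 1 + 1 - (⌊L⌋+1)).toNat : ℝ) ≤ R - L + 1 := by
    rcases le_or_gt (⌈R⌉ - 1 + 1 - (⌊L⌋+1)) 0 with h | h
    · rw [Int.toNat_of_nonpos h]; push_cast; linarith
    · have hnn := Int.toNat_of_nonneg (le_of_lt h)
      have h2 : (((⌈R⌉ - 1 + 1 - (⌊L⌋+1)).toNat : ℤ) : ℝ) ≤ R - L + 1 := by
        rw [hnn]; push_cast; linarith
      exact_mod_cast h2
  calc (K.card : ℝ) ≤ ((Finset.Icc (⌊L⌋+1) (⌈R⌉-1)).card : ℝ) := by exact_mod_cast hcard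
    _ = ((⌈R⌉ - 1 + 1 - (⌊L⌋+1)).toNat : ℝ) := by rw [hIcc]
    _ ≤ R - L + 1 := this



theorem arith_final (d t sv tv e : ℝ) (hd : 0 < d) (ht : 0 < t) (hsv : 0 < sv)
    (hs2 : sv^2 = t) (hed : e ≤ d) (htv : 0 ≤ tv)
    (hmain : d*t*(3/4) ≤ (t*d + 3*sv)*tv) :
    min (1/8 : ℝ) ((1/8)*sv*e) ≤ tv := by
  rcases le_or_gt (t*d) sv with hc | hc
  · refine le_trans (min_le_right _ _) ?_
    have h4 : (t*d + 3*sv)*tv ≤ (4*sv)*tv := by nlinarith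
    have key : (3/16)*d*sv ≤ tv := by
      have h1 : ((3/16)*d*sv) * sv ≤ tv * sv := by nlinarith
      exact le_of_mul_le_mul_right h1 hsv
    nlinarith [mul_le_mul_of_nonneg_left hed (le_of_lt hsv)]
  · refine le_trans (min_le_left _ _) ?_
    have h4 : (t*d + 3*sv)*tv ≤ (4*(t*d))*tv := by nlinarith
    have h1 : (3/16)*(t*d) ≤ tv*(t*d) := by nlinarith
    have := le_of_mul_le_mul_right (by nlinarith : (3/16)*(t*d) ≤ tv*(t*d)) (by positivity : 0 < t*d)
    linarith

set_option maxHeartbeats 1000000 in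
theorem stmt12 : ∃ ε₀ > (0 : ℝ), ∃ c > (0 : ℝ),
    ∀ (M T : ℕ) (p q : Fin M → ℝ) (ε : ℝ),
    (∀ x, 0 ≤ p x) → (∑ x, p x = 1) →
    (∀ x, 0 ≤ q x) → (∑ x, q x = 1) →
    (1 / 2 : ℝ) * ∑ x, |p x - q x| ≥ ε →
    (1 / 2 : ℝ) * ∑ y : Fin T → Fin M, |(∏ i, p (y i)) - ∏ i, q (y i)|
      ≥ min ε₀ (c * Real.sqrt T * ε) := by
  classical
  refine ⟨1/8, by norm_num, 1/8, by norm_num, ?_⟩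
  intro M T p q ε hp0 hp1 hq0 hq1 hTV
  have hLHSnn : 0 ≤ (1/2:ℝ) * ∑ y : Fin T → Fin M, |(∏ i, p (y i)) - ∏ i, q (y i)| := by
    positivity
  have hsq : 0 ≤ Real.sqrt T := Real.sqrt_nonneg _
  rcases le_or_gt ε 0 with hε | hε
  · have h1 : (1/8:ℝ) * Real.sqrt T * ε ≤ 0 := by nlinarith
    have := min_le_right (1/8:ℝ) ((1/8) * Real.sqrt T * ε)
    linarith
  rcases Nat.eq_zero_or_pos T with hT0 | hT1
  · subst hT0
    simp only [Nat.cast_zero, Real.sqrt_zero, mul_zero, zero_mul]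
    have := min_le_right (1/8:ℝ) 0
    linarith
  -- MAIN CASE
  set A : Finset (Fin M) := univ.filter (fun x => q x ≤ p x) with hA
  set α : ℝ := ∑ x ∈ A, p x with hα
  set β : ℝ := ∑ x ∈ A, q x with hβ
  -- α - β equals half the L1 distance
  have hz : ∑ x, (p x - q x) = 0 := by rw [Finset.sum_sub_distrib, hp1, hq1]; ring
  have hsplit := Finset.sum_filter_add_sum_filter_not univ (fun x => q x ≤ p x)
    (fun x => p x - q x)
  have habs1 : ∑ x ∈ A, |p x - q x| = ∑ x ∈ A, (p x - q x) := by
    refine Finset.sum_congr rfl fun x hx => ?_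
    rw [hA, Finset.mem_filter] at hx
    exact abs_of_nonneg (by linarith [hx.2])
  have habs2 : ∑ x ∈ univ.filter (fun x => ¬ q x ≤ p x), |p x - q x|
      = -∑ x ∈ univ.filter (fun x => ¬ q x ≤ p x), (p x - q x) := by
    rw [← Finset.sum_neg_distrib]
    refine Finset.sum_congr rfl fun x hx => ?_
    rw [Finset.mem_filter] at hx
    exact abs_of_neg (by push_neg at hx; linarith [hx.2])
  have habs : ∑ x, |p x - q x| = 2 * (α - β) := by
    have hsplitabs := Finset.sum_filter_add_sum_filter_not univ (fun x => q x ≤ p x)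
      (fun x => |p x - q x|)
    have hab : α - β = ∑ x ∈ A, (p x - q x) := by
      rw [hα, hβ, Finset.sum_sub_distrib]
    rw [← hsplitabs, habs1, habs2, ← hab]
    have : ∑ x ∈ univ.filter (fun x => ¬ q x ≤ p x), (p x - q x) = -(α - β) := by
      rw [hab] at *
      have := hsplit
      rw [hz] at this  -- wrong: hsplit has sum over univ
      linarith
    rw [this]
    ring
  have hδε : ε ≤ α - β := by rw [habs] at hTV; linarith
  have hβα : β < α := by linarith
  have h0β : 0 ≤ β := Finset.sum_nonneg fun x _ => hq0 x
  have hα1 : α ≤ 1 := by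
    rw [hα, ← hp1]
    exact Finset.sum_le_sum_of_subset_of_nonneg (Finset.filter_subset _ _)
      (fun x _ _ => hp0 x)
  set δ : ℝ := α - β with hδ
  have hδpos : 0 < δ := by linarith
  set s : ℝ := Real.sqrt T with hs
  have hTpos : (0:ℝ) < T := by exact_mod_cast hT1
  have hs0 : 0 < s := Real.sqrt_pos.mpr hTpos
  have hs2 : s^2 = T := Real.sq_sqrt (le_of_lt hTpos)
  have hs1 : 1 ≤ s := by
    rw [hs]
    rw [show (1:ℝ) = Real.sqrt 1 by simp]
    exact Real.sqrt_le_sqrt (by exact_mod_cast hT1)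
  set L : ℝ := ((T:ℝ)-1)*β - s with hL
  set R : ℝ := ((T:ℝ)-1)*α + s with hR
  set K : Finset ℕ := (range T).filter (fun (j:ℕ) => L < (j:ℝ) ∧ (j:ℝ) < R) with hK
  set F : ℝ → ℝ := fun t => ∑ j ∈ K, ∑ i ∈ Icc (j+1) T, Bb T i t with hF
  clear_value A α β δ s L R K F
  have hFd : ∀ t : ℝ, HasDerivAt F (∑ j ∈ K, (T:ℝ) * Bb (T-1) j t) t := by
    intro t
    rw [hF]
    refine HasDerivAt.fun_sum fun j hj => ?_
    have : j < T := by
      rw [hK, Finset.mem_filter, Finset.mem_range] at hj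
      exact hj.1
    exact hasDerivAt_G T j t this
  obtain ⟨ξ, hξmem, hslope⟩ := exists_hasDerivAt_eq_slope F
    (fun t => ∑ j ∈ K, (T:ℝ) * Bb (T-1) j t) hβα
    (fun x _ => (hFd x).continuousAt.continuousWithinAt)
    (fun x _ => hFd x)
  obtain ⟨hβξ, hξα⟩ := hξmem
  have hξ0 : 0 ≤ ξ := by linarith
  have hξ1 : ξ ≤ 1 := by linarith
  -- Chebyshev coverage
  have hcast : ((T-1 : ℕ):ℝ) = (T:ℝ) - 1 := by
    rw [Nat.cast_sub hT1]; simp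
  have hcov : ∀ j ∈ range ((T-1)+1), |(j:ℝ) - ((T-1:ℕ):ℝ)*ξ| < s → j ∈ K := by
    intro j hj habsj
    rw [hcast] at habsj
    have hj' : j ∈ range T := by
      rw [Finset.mem_range] at hj ⊢; omega
    rw [hK, Finset.mem_filter]
    refine ⟨hj', ?_, ?_⟩
    · rw [hL]
      have hT1' : (0:ℝ) ≤ (T:ℝ)-1 := by
        have : (1:ℝ) ≤ T := by exact_mod_cast hT1
        linarith
      have h1 : ((T:ℝ)-1)*β ≤ ((T:ℝ)-1)*ξ :=
        mul_le_mul_of_nonneg_left (le_of_lt hβξ) hT1'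
      have := abs_lt.mp habsj
      linarith [this.1]
    · rw [hR]
      have hT1' : (0:ℝ) ≤ (T:ℝ)-1 := by
        have : (1:ℝ) ≤ T := by exact_mod_cast hT1
        linarith
      have h1 : ((T:ℝ)-1)*ξ ≤ ((T:ℝ)-1)*α :=
        mul_le_mul_of_nonneg_left (le_of_lt hξα) hT1'
      have := abs_lt.mp habsj
      linarith [this.2]
  have hcheb := cheb (T-1) ξ s hξ0 hξ1 hs0 K hcov
  have hvar : ((T-1:ℕ):ℝ)*ξ*(1-ξ)/s^2 ≤ 1/4 := by
    rw [hs2, hcast]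
    rw [div_le_iff₀ hTpos]
    have hx : ξ*(1-ξ) ≤ 1/4 := by nlinarith [sq_nonneg (ξ - 1/2)]
    have hT1' : (T:ℝ)-1 ≤ (T:ℝ) := by linarith
    have h0 : (0:ℝ) ≤ ξ*(1-ξ) := by nlinarith
    nlinarith
  have hsumK : (3:ℝ)/4 ≤ ∑ j ∈ K, Bb (T-1) j ξ := by linarith
  -- slope identity
  have hFdiff : F α - F β = δ * ∑ j ∈ K, (T:ℝ) * Bb (T-1) j ξ := by
    have hne : α - β ≠ 0 := sub_ne_zero.mpr (ne_of_gt hβα)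
    rw [hslope, hδ]
    field_simp
  have hFlow : δ * (T:ℝ) * (3/4) ≤ F α - F β := by
    rw [hFdiff]
    have : ∑ j ∈ K, (T:ℝ) * Bb (T-1) j ξ = (T:ℝ) * ∑ j ∈ K, Bb (T-1) j ξ := by
      rw [Finset.mul_sum]
    rw [this]
    have h' : (δ*(T:ℝ))*(3/4) ≤ (δ*(T:ℝ))*(∑ j ∈ K, Bb (T-1) j ξ) :=
      mul_le_mul_of_nonneg_left hsumK (by positivity)
    linarith
  -- upper bound via TVbin
  set TVbin : ℝ := (1/2) * ∑ k ∈ range (T+1), |Bb T k α - Bb T k β| with hTVbin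
  clear_value TVbin
  have hTVbin0 : 0 ≤ TVbin := by rw [hTVbin]; positivity
  have hGle : ∀ j ∈ K, (∑ i ∈ Icc (j+1) T, Bb T i α) - (∑ i ∈ Icc (j+1) T, Bb T i β)
      ≤ TVbin := by
    intro j hj
    have hjT : j < T := by
      rw [hK, Finset.mem_filter, Finset.mem_range] at hj; exact hj.1
    have hzero : ∑ i ∈ range (T+1), (Bb T i α - Bb T i β) = 0 := by
      rw [Finset.sum_sub_distrib, sum_Bb, sum_Bb]; ring
    have hsplit2 := Finset.sum_range_add_sum_Ico (fun i => Bb T i α - Bb T i β)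
      (show j+1 ≤ T+1 by omega)
    rw [Finset.Ico_add_one_right_eq_Icc] at hsplit2
    have habs1' : |∑ i ∈ Icc (j+1) T, (Bb T i α - Bb T i β)|
        ≤ ∑ i ∈ Icc (j+1) T, |Bb T i α - Bb T i β| := Finset.abs_sum_le_sum_abs _ _
    have habs2' : |∑ i ∈ Icc (j+1) T, (Bb T i α - Bb T i β)|
        ≤ ∑ i ∈ range (j+1), |Bb T i α - Bb T i β| := by
      have heq : ∑ i ∈ Icc (j+1) T, (Bb T i α - Bb T i β)
          = -∑ i ∈ range (j+1), (Bb T i α - Bb T i β) := by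
        rw [hzero] at hsplit2; linarith
      rw [heq, abs_neg]
      exact Finset.abs_sum_le_sum_abs _ _
    have hsplitabs := Finset.sum_range_add_sum_Ico (fun i => |Bb T i α - Bb T i β|)
      (show j+1 ≤ T+1 by omega)
    rw [Finset.Ico_add_one_right_eq_Icc] at hsplitabs
    have : (∑ i ∈ Icc (j+1) T, Bb T i α) - (∑ i ∈ Icc (j+1) T, Bb T i β)
        = ∑ i ∈ Icc (j+1) T, (Bb T i α - Bb T i β) := by
      rw [Finset.sum_sub_distrib]
    rw [this, hTVbin]
    calc ∑ i ∈ Icc (j+1) T, (Bb T i α - Bb T i β)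
        ≤ |∑ i ∈ Icc (j+1) T, (Bb T i α - Bb T i β)| := le_abs_self _
      _ ≤ (1/2) * ∑ k ∈ range (T+1), |Bb T k α - Bb T k β| := by linarith
  have hFup : F α - F β ≤ (K.card : ℝ) * TVbin := by
    rw [hF]
    have : (∑ j ∈ K, ∑ i ∈ Icc (j+1) T, Bb T i α) - ∑ j ∈ K, ∑ i ∈ Icc (j+1) T, Bb T i β
        = ∑ j ∈ K, ((∑ i ∈ Icc (j+1) T, Bb T i α) - ∑ i ∈ Icc (j+1) T, Bb T i β) := by
      rw [Finset.sum_sub_distrib]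
    rw [this]
    calc ∑ j ∈ K, ((∑ i ∈ Icc (j+1) T, Bb T i α) - ∑ i ∈ Icc (j+1) T, Bb T i β)
        ≤ ∑ _j ∈ K, TVbin := Finset.sum_le_sum hGle
      _ = (K.card : ℝ) * TVbin := by rw [Finset.sum_const, nsmul_eq_mul]
  -- card bound
  have hLR : 0 ≤ R - L := by
    rw [hR, hL]
    have : (0:ℝ) ≤ (T:ℝ)-1 := by
      have : (1:ℝ) ≤ T := by exact_mod_cast hT1
      linarith
    nlinarith
  have hcard : (K.card : ℝ) ≤ (T:ℝ)*δ + 3*s := by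
    have := card_filter_Ioo T L R hLR
    rw [← hK] at this
    have hRL : R - L + 1 = ((T:ℝ)-1)*δ + 2*s + 1 := by rw [hR, hL, hδ]; ring
    rw [hRL] at this
    nlinarith
  -- main inequality
  have hmain : δ * (T:ℝ) * (3/4) ≤ ((T:ℝ)*δ + 3*s) * TVbin := by
    calc δ * (T:ℝ) * (3/4) ≤ F α - F β := hFlow
      _ ≤ (K.card : ℝ) * TVbin := hFup
      _ ≤ ((T:ℝ)*δ + 3*s) * TVbin := mul_le_mul_of_nonneg_right hcard hTVbin0
  -- TVbin lower bounds min
  have hmain' : δ * (T:ℝ) * (3/4) ≤ ((T:ℝ)*δ + 3*s) * TVbin := hmain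
  have hfinal : min (1/8 : ℝ) ((1/8) * s * ε) ≤ TVbin :=
    arith_final δ (T:ℝ) s TVbin ε hδpos hTpos hs0 hs2 hδε hTVbin0
      (by linarith [hmain'])
  -- reduction
  have hred := reduction (T := T) p q hp1 hq1 A
  rw [← hα, ← hβ] at hred
  have : TVbin ≤ (1/2:ℝ) * ∑ y : Fin T → Fin M, |(∏ i, p (y i)) - ∏ i, q (y i)| := by
    rw [hTVbin]; linarith
  exact le_trans hfinal this
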